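/- Let (G,P) be a quasi-lattice ordered group with left regular representation L on ℓ²(P). For p, q ∈ P with p ∨ q < ∞, we have L_p* L_q = L_{p⁻¹(p∨q)} L_{q⁻¹(p∨q)}*, and if p and q have no common upper bound then L_p* L_q = 0. -/

import Mathlib

open scoped InnerProductSpace

section aux
variable {ι : Type*} [DecidableEq ι]

lemma lp_apply_eq_inner (f : lp (fun _ : ι => ℂ) 2) (i : ι) :
    f i = ⟪lp.single 2 i (1 : ℂ), f⟫_ℂ := by
  rw [lp.inner_single_left]; simp

lemma lp_single_dense :
    Dense (↑(Submodule.span ℂ (Set.range fun i : ι => lp.single 2 i (1 : ℂ))) :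
      Set (lp (fun _ : ι => ℂ) 2)) := by
  let b : HilbertBasis ι ℂ (lp (fun _ : ι => ℂ) 2) := default
  have hb : ∀ i, b i = lp.single 2 i (1 : ℂ) := fun i => (b.repr_symm_single i).symm
  have hd := b.dense_span
  have hr : (Set.range fun i : ι => lp.single 2 i (1 : ℂ)) = Set.range ⇑b := by
    ext v; simp [hb]
  rw [hr, dense_iff_closure_eq, ← Submodule.topologicalClosure_coe, hd]
  rfl

lemma op_ext {T S : lp (fun _ : ι => ℂ) 2 →L[ℂ] lp (fun _ : ι => ℂ) 2}
    (h : ∀ i : ι, T (lp.single 2 i 1) = S (lp.single 2 i 1)) : T = S :=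
  ContinuousLinearMap.ext_on lp_single_dense (by rintro _ ⟨i, rfl⟩; exact h i)

end aux

section adj
variable {G : Type*} [Group G] [DecidableEq G] (P : Submonoid G)
variable (L : P → lp (fun _ : P => ℂ) 2 →L[ℂ] lp (fun _ : P => ℂ) 2)
variable (hL : ∀ p x : P, L p (lp.single 2 x 1) = lp.single 2 (p * x) 1)

include hL in
lemma adj_comp (r z y : P) :
    (ContinuousLinearMap.adjoint (L r) (lp.single 2 z 1)) y
      = if (r * y : P) = z then 1 else 0 := by
  rw [lp_apply_eq_inner, ContinuousLinearMap.adjoint_inner_right, hL, lp.inner_single_left]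
  by_cases h : (r * y : P) = z
  · subst h; simp [lp.single_apply_self]
  · rw [lp.single_apply_ne (E := fun _ : ↥P => ℂ) 2 z 1 h, if_neg h]; simp

include hL in
lemma adj_single_of (r w : P) :
    ContinuousLinearMap.adjoint (L r) (lp.single 2 (r * w) 1) = lp.single 2 w 1 := by
  apply lp.ext; funext y
  rw [adj_comp P L hL]
  have h : (r * y : P) = r * w ↔ y = w := by
    constructor
    · intro h
      have := congrArg (Subtype.val) h
      simp only [Submonoid.coe_mul] at this
      exact Subtype.ext (mul_left_cancel this)
    · rintro rfl; rfl
  by_cases hy : y = w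
  · subst hy; simp [lp.single_apply_self]
  · rw [if_neg (fun hh => hy (h.mp hh)), lp.single_apply_ne (E := fun _ : ↥P => ℂ) 2 w 1 hy]

include hL in
lemma adj_single_none (r z : P) (h : ∀ w : P, r * w ≠ z) :
    ContinuousLinearMap.adjoint (L r) (lp.single 2 z 1) = 0 := by
  apply lp.ext; funext y
  rw [adj_comp P L hL, if_neg (h y)]
  rfl

end adj

/-- for the left regular representation `L_p ε_x = ε_{px}` on `ℓ²(P)`:
if `m = p ∨ q` exists then `L_p* L_q = L_{p⁻¹(p∨q)} L_{q⁻¹(p∨q)}*`, and if `p, q` have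
no common upper bound then `L_p* L_q = 0`. -/
theorem stmt12 {G : Type*} [Group G] [DecidableEq G] (P : Submonoid G)
    (hP : ∀ g : G, g ∈ P → g⁻¹ ∈ P → g = 1)
    (hQL : ∀ x y : G, (∃ u, x⁻¹ * u ∈ P ∧ y⁻¹ * u ∈ P) →
      ∃ m, (x⁻¹ * m ∈ P ∧ y⁻¹ * m ∈ P) ∧
        ∀ u, x⁻¹ * u ∈ P → y⁻¹ * u ∈ P → m⁻¹ * u ∈ P)
    (L : P → lp (fun _ : P => ℂ) 2 →L[ℂ] lp (fun _ : P => ℂ) 2)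
    (hL : ∀ p x : P, L p (lp.single 2 x 1) = lp.single 2 (p * x) 1)
    (p q : P) :
    (∀ m a b : P,
      ((p : G)⁻¹ * m ∈ P ∧ (q : G)⁻¹ * m ∈ P ∧
        ∀ u, (p : G)⁻¹ * u ∈ P → (q : G)⁻¹ * u ∈ P → (m : G)⁻¹ * u ∈ P) →
      (a : G) = (p : G)⁻¹ * m → (b : G) = (q : G)⁻¹ * m →
      ContinuousLinearMap.adjoint (L p) * L q = L a * ContinuousLinearMap.adjoint (L b)) ∧
    ((¬ ∃ u : G, (p : G)⁻¹ * u ∈ P ∧ (q : G)⁻¹ * u ∈ P) →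
      ContinuousLinearMap.adjoint (L p) * L q = 0) := by
  constructor
  · rintro m a b ⟨hpm, hqm, hmax⟩ ha hb
    apply op_ext
    intro x
    simp only [ContinuousLinearMap.mul_apply, hL]
    by_cases h : (p : G)⁻¹ * ((q : G) * (x : G)) ∈ P
    · -- common upper bound case at this x
      set w : P := ⟨(p : G)⁻¹ * ((q : G) * (x : G)), h⟩ with hw
      have hpw : p * w = q * x := by
        apply Subtype.ext
        simp [hw, mul_assoc]
      have hbx : (b : G)⁻¹ * (x : G) ∈ P := by
        have : (m : G)⁻¹ * ((q : G) * (x : G)) ∈ P := by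
          apply hmax ((q : G) * (x : G)) h
          simpa [mul_assoc] using x.2
        have hbinv : (b : G)⁻¹ = (m : G)⁻¹ * (q : G) := by
          rw [hb]; group
        rw [hbinv, mul_assoc]
        exact this
      set v : P := ⟨(b : G)⁻¹ * (x : G), hbx⟩ with hv
      have hbv : b * v = x := by
        apply Subtype.ext; simp [hv]
      rw [← hpw, adj_single_of P L hL, ← hbv, adj_single_of P L hL, hL]
      congr 1
      apply Subtype.ext
      have hav : ((a * v : P) : G) = (p : G)⁻¹ * ((q : G) * (x : G)) := by
        push_cast
        rw [ha, show (v : G) = (b : G)⁻¹ * (x : G) from rfl, hb]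
        group
      simp only [hw]
      exact hav.symm
    · -- no common upper bound at this x
      have h1 : ∀ w : P, p * w ≠ q * x := by
        intro w hw
        apply h
        have := congrArg (Subtype.val) hw
        simp only [Submonoid.coe_mul] at this
        have : (p : G)⁻¹ * ((q : G) * (x : G)) = (w : G) := by
          rw [← this]; group
        rw [this]; exact w.2
      have h2 : ∀ v : P, b * v ≠ x := by
        intro v hv
        apply h
        have := congrArg (Subtype.val) hv
        simp only [Submonoid.coe_mul] at this
        have hvv : (v : G) = (m : G)⁻¹ * ((q : G) * (x : G)) := by
          rw [← this, hb]; group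
        have : (p : G)⁻¹ * ((q : G) * (x : G))
            = ((p : G)⁻¹ * (m : G)) * ((m : G)⁻¹ * ((q : G) * (x : G))) := by group
        rw [this, ← hvv]
        exact mul_mem hpm v.2
      rw [adj_single_none P L hL _ _ h1, adj_single_none P L hL _ _ h2]
      simp
  · intro hno
    apply op_ext
    intro x
    simp only [ContinuousLinearMap.mul_apply, hL, ContinuousLinearMap.zero_apply]
    apply adj_single_none P L hL
    intro w hw
    apply hno
    refine ⟨(q : G) * (x : G), ?_, ?_⟩
    · have := congrArg (Subtype.val) hw
      simp only [Submonoid.coe_mul] at this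
      have : (p : G)⁻¹ * ((q : G) * (x : G)) = (w : G) := by rw [← this]; group
      rw [this]; exact w.2
    · simpa [mul_assoc] using x.2
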